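/- arXiv:1106.2778 — 2 statements merged into one kernel-verified Lean document; each statement's English description precedes it below -/
import Mathlib

section
/- Let T > 0, a ≥ 0, and let f, r : [0,T] → [0,∞) be integrable. Define F(t,z) = f(t)·z·(1 + |log z| + a) + r(t) for z > 0 and F(t,0) = r(t). Suppose x : [0,T] → [0,∞) is absolutely continuous with x(0) = 0 and x'(t) ≤ F(t, x(t)) for a.e. t, and suppose y : [0,T] → (0,∞) is absolutely continuous with y(0) = y₀ > 0 and y'(t) = F(t, y(t)) for a.e. t. Then x(t) ≤ y(t) for every t ∈ [0,T]. Moreover, y is nondecreasing on [0,T]. -/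
open MeasureTheory intervalIntegral
open scoped Topology

lemma osgood_Glip {a m M p q : ℝ} (ha : 0 ≤ a) (hm : 0 < m) (hmp : m ≤ p)
    (hpq : p ≤ q) (hqM : q ≤ M) :
    q * (1 + |Real.log q| + a) - p * (1 + |Real.log p| + a) ≤
      (2 + a + |Real.log m| + |Real.log M|) * (q - p) := by
  have hp : 0 < p := hm.trans_le hmp
  have hq : 0 < q := hp.trans_le hpq
  have h1 : Real.log q - Real.log p ≤ (q - p) / p := by
    have h := Real.log_le_sub_one_of_pos (div_pos hq hp)
    rwa [Real.log_div hq.ne' hp.ne', div_sub_one hp.ne'] at h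
  have h2 : |Real.log q| - |Real.log p| ≤ Real.log q - Real.log p := by
    have h := abs_sub_abs_le_abs_sub (Real.log q) (Real.log p)
    rwa [abs_of_nonneg (sub_nonneg.2 (Real.log_le_log hp hpq))] at h
  have h3 : |Real.log q| ≤ |Real.log m| + |Real.log M| := by
    rw [abs_le]
    have hmq : Real.log m ≤ Real.log q := Real.log_le_log hm (hmp.trans hpq)
    have hqM' : Real.log q ≤ Real.log M := Real.log_le_log hq hqM
    constructor
    · nlinarith [neg_abs_le (Real.log m), abs_nonneg (Real.log M)]
    · nlinarith [le_abs_self (Real.log M), abs_nonneg (Real.log m)]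
  have h4 : p * (|Real.log q| - |Real.log p|) ≤ q - p := by
    have h := mul_le_mul_of_nonneg_left (h2.trans h1) hp.le
    rwa [mul_div_cancel₀ _ hp.ne'] at h
  nlinarith [mul_le_mul_of_nonneg_left h3 (sub_nonneg.2 hpq), abs_nonneg (Real.log p)]


/-- **Osgood-type comparison principle.**  Let
`F(t,z) = f(t) z (1 + |log z| + a) + r(t)` for `z > 0` and `F(t,0) = r(t)`
(extended by `r(t)` for `z ≤ 0`).  If `x` is absolutely continuous and
nonnegative with `x(0) = 0` and `x' ≤ F(t, x)` a.e., while `y` is absolutely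
continuous and positive with `y(0) = y₀ > 0` and `y' = F(t, y)` a.e.
(absolute continuity encoded via integrable a.e. derivatives and the
fundamental theorem of calculus), then `x ≤ y` on `[0,T]`, and `y` is
nondecreasing on `[0,T]`. -/
theorem osgood_comparison (T a : ℝ) (hT : 0 < T) (ha : 0 ≤ a)
    (f r : ℝ → ℝ)
    (hfint : IntegrableOn f (Set.Icc 0 T)) (hrint : IntegrableOn r (Set.Icc 0 T))
    (hf0 : ∀ t ∈ Set.Icc (0 : ℝ) T, 0 ≤ f t)
    (hr0 : ∀ t ∈ Set.Icc (0 : ℝ) T, 0 ≤ r t)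
    (F : ℝ → ℝ → ℝ)
    (hF : ∀ t z : ℝ, F t z =
      if 0 < z then f t * z * (1 + |Real.log z| + a) + r t else r t)
    (x x' y y' : ℝ → ℝ) (y₀ : ℝ) (hy₀pos : 0 < y₀)
    (hx0 : x 0 = 0)
    (hxnn : ∀ t ∈ Set.Icc (0 : ℝ) T, 0 ≤ x t)
    (hx'int : IntegrableOn x' (Set.Icc 0 T))
    (hxac : ∀ t ∈ Set.Icc (0 : ℝ) T, x t = x 0 + ∫ s in (0 : ℝ)..t, x' s)
    (hxineq : ∀ᵐ t ∂(volume.restrict (Set.Icc (0 : ℝ) T)), x' t ≤ F t (x t))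
    (hy0 : y 0 = y₀)
    (hypos : ∀ t ∈ Set.Icc (0 : ℝ) T, 0 < y t)
    (hy'int : IntegrableOn y' (Set.Icc 0 T))
    (hyac : ∀ t ∈ Set.Icc (0 : ℝ) T, y t = y 0 + ∫ s in (0 : ℝ)..t, y' s)
    (hyeq : ∀ᵐ t ∂(volume.restrict (Set.Icc (0 : ℝ) T)), y' t = F t (y t)) :
    (∀ t ∈ Set.Icc (0 : ℝ) T, x t ≤ y t) ∧ MonotoneOn y (Set.Icc (0 : ℝ) T) := by
  set I : Set ℝ := Set.Icc 0 T with hI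
  have h0I : (0 : ℝ) ∈ I := ⟨le_refl 0, hT.le⟩
  -- interval integrability of x', y', f on subintervals of I
  have hii : ∀ g : ℝ → ℝ, IntegrableOn g I → ∀ a b : ℝ, a ∈ I → b ∈ I →
      IntervalIntegrable g volume a b := by
    intro g hg a b haI hbI
    exact (hg.mono_set (Set.uIcc_subset_Icc haI hbI)).intervalIntegrable
  -- continuity of x and y on I
  have hcont : ∀ (z z' : ℝ → ℝ), IntegrableOn z' I →
      (∀ t ∈ I, z t = z 0 + ∫ s in (0 : ℝ)..t, z' s) → ContinuousOn z I := by
    intro z z' hint hac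
    have h1 : ContinuousOn (fun t => z 0 + ∫ s in (0 : ℝ)..t, z' s) (Set.uIcc 0 T) :=
      continuousOn_const.add (continuousOn_primitive_interval
        (by rwa [Set.uIcc_of_le hT.le]))
    rw [Set.uIcc_of_le hT.le] at h1
    exact h1.congr hac
  have hxcont : ContinuousOn x I := hcont x x' hx'int hxac
  have hycont : ContinuousOn y I := hcont y y' hy'int hyac
  -- difference formula
  have hdiff : ∀ (z z' : ℝ → ℝ), IntegrableOn z' I →
      (∀ t ∈ I, z t = z 0 + ∫ s in (0 : ℝ)..t, z' s) →
      ∀ u v : ℝ, u ∈ I → v ∈ I → z v - z u = ∫ s in u..v, z' s := by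
    intro z z' hint hac u v huI hvI
    rw [hac u huI, hac v hvI]
    have h := integral_interval_sub_left (hii z' hint 0 v h0I hvI) (hii z' hint 0 u h0I huI)
    linarith [h]
  -- y' is a.e. nonnegative on I
  have hy'nn : ∀ᵐ t ∂(volume.restrict I), 0 ≤ y' t := by
    filter_upwards [hyeq, ae_restrict_mem measurableSet_Icc] with t ht htI
    rw [ht, hF]
    rw [if_pos (hypos t htI)]
    have h1 : (0:ℝ) ≤ 1 + |Real.log (y t)| + a := by positivity
    have := mul_nonneg (mul_nonneg (hf0 t htI) (hypos t htI).le) h1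
    linarith [hr0 t htI]
  -- monotonicity of y
  have hymono : MonotoneOn y I := by
    intro u huI v hvI huv
    have h := hdiff y y' hy'int hyac u v huI hvI
    have hnn : 0 ≤ ∫ s in u..v, y' s := by
      apply integral_nonneg_of_ae_restrict (μ := volume) huv
      refine ae_restrict_of_ae_restrict_of_subset ?_ hy'nn
      exact fun s hs => ⟨huI.1.trans hs.1, hs.2.trans hvI.2⟩
    linarith
  have hyge : ∀ t ∈ I, y₀ ≤ y t := by
    intro t htI
    rw [← hy0]; exact hymono h0I htI htI.1
  -- upper bound M
  obtain ⟨tx, htx, hmx⟩ := isCompact_Icc.exists_isMaxOn ⟨0, h0I⟩ hxcont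
  obtain ⟨ty, hty, hmy⟩ := isCompact_Icc.exists_isMaxOn ⟨0, h0I⟩ hycont
  set M : ℝ := max (x tx) (y ty) with hM
  have hxleM : ∀ t ∈ I, x t ≤ M := fun t ht => (hmx ht).trans (le_max_left _ _)
  have hyleM : ∀ t ∈ I, y t ≤ M := fun t ht => (hmy ht).trans (le_max_right _ _)
  set L : ℝ := 2 + a + |Real.log y₀| + |Real.log M| with hL
  have hLpos : 0 < L := by positivity
  have hL0 : (0:ℝ) ≤ L := hLpos.le
  -- bound on |x - y|
  obtain ⟨tc, htc, hmc⟩ := isCompact_Icc.exists_isMaxOn ⟨0, h0I⟩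
    ((hxcont.sub hycont).abs)
  set C : ℝ := |x tc - y tc| with hC
  have hCb : ∀ u ∈ I, |x u - y u| ≤ C := fun u hu => hmc hu
  refine ⟨?_, hymono⟩
  by_contra hcon
  push_neg at hcon
  obtain ⟨t₀, ht₀I, hlt⟩ := hcon
  set S : Set ℝ := {t | t ∈ Set.Icc 0 t₀ ∧ x t ≤ y t} with hS
  have h0S : 0 ∈ S := ⟨⟨le_refl 0, ht₀I.1⟩, by rw [hx0, hy0]; exact hy₀pos.le⟩
  have hSsub : S ⊆ Set.Icc 0 t₀ := fun t ht => ht.1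
  have hSI : Set.Icc 0 t₀ ⊆ I := Set.Icc_subset_Icc le_rfl ht₀I.2
  have hSclosed : IsClosed S := by
    have hwc : ContinuousOn (fun t => x t - y t) (Set.Icc 0 t₀) :=
      (hxcont.mono hSI).sub (hycont.mono hSI)
    have h := hwc.preimage_isClosed_of_isClosed isClosed_Icc (isClosed_Iic (a := (0:ℝ)))
    convert h using 1
    ext t
    simp only [hS, Set.mem_setOf_eq, Set.mem_inter_iff, Set.mem_preimage, Set.mem_Iic,
      sub_nonpos]
  have hScpt : IsCompact S := isCompact_Icc.of_isClosed_subset hSclosed hSsub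
  set s := sSup S with hsdef
  have hsS : s ∈ S := hScpt.sSup_mem ⟨0, h0S⟩
  have hsIcc : s ∈ Set.Icc 0 t₀ := hSsub hsS
  have hsI : s ∈ I := hSI hsIcc
  have hst₀ : s < t₀ := lt_of_le_of_ne hsIcc.2 (by
    intro h; rw [h] at hsS; exact absurd hsS.2 (not_le.2 hlt))
  have hgt : ∀ t, s < t → t ≤ t₀ → y t < x t := by
    intro t hst htt₀
    by_contra hle
    push_neg at hle
    have hts : t ∈ S := ⟨⟨hsIcc.1.trans hst.le, htt₀⟩, hle⟩
    exact absurd (le_csSup hScpt.bddAbove hts) (not_le.2 hst)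
  -- primitive of L * f
  have hkint : IntegrableOn (fun u => L * f u) I := hfint.const_mul L
  set A : ℝ → ℝ := fun t => ∫ u in s..t, L * f u with hA
  have hAcont : ContinuousOn A (Set.Icc s t₀) := by
    have := continuousOn_primitive_interval (a := s) (b := t₀) (μ := volume)
      (f := fun u => L * f u)
      (by rw [Set.uIcc_of_le hst₀.le]
          exact hkint.mono_set (Set.Icc_subset_Icc hsI.1 ht₀I.2))
    rwa [Set.uIcc_of_le hst₀.le] at this
  have hAs : A s = 0 := integral_same
  have hAmono : ∀ u v, s ≤ u → u ≤ v → v ≤ t₀ → A u ≤ A v := by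
    intro u v hsu huv hvt₀
    have huI : u ∈ I := ⟨hsI.1.trans hsu, (huv.trans hvt₀).trans ht₀I.2⟩
    have hvI : v ∈ I := ⟨huI.1.trans huv, hvt₀.trans ht₀I.2⟩
    have h := integral_interval_sub_left (hii _ hkint s v hsI hvI) (hii _ hkint s u hsI huI)
    have hnn : 0 ≤ ∫ w in u..v, L * f w := by
      apply integral_nonneg huv
      intro w hw
      exact mul_nonneg hL0 (hf0 w ⟨huI.1.trans hw.1, hw.2.trans hvI.2⟩)
    simp only [hA]
    linarith [h, hnn]
  -- choose t₁ > s with A t₁ ≤ 1/2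
  have hcw : ContinuousWithinAt A (Set.Icc s t₀) s := hAcont s ⟨le_rfl, hst₀.le⟩
  rw [Metric.continuousWithinAt_iff] at hcw
  obtain ⟨δ, hδ, hδ'⟩ := hcw (1/2) (by norm_num)
  set t₁ : ℝ := min t₀ (s + δ/2) with ht₁def
  have hst₁ : s < t₁ := lt_min hst₀ (by linarith)
  have ht₁t₀ : t₁ ≤ t₀ := min_le_left _ _
  have ht₁Icc : t₁ ∈ Set.Icc s t₀ := ⟨hst₁.le, ht₁t₀⟩
  have ht₁I : t₁ ∈ I := ⟨hsI.1.trans hst₁.le, ht₁t₀.trans ht₀I.2⟩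
  have hAt₁ : A t₁ ≤ 1/2 := by
    have hd : dist t₁ s < δ := by
      rw [Real.dist_eq, abs_of_nonneg (by linarith [hst₁.le] : (0:ℝ) ≤ t₁ - s)]
      have : t₁ ≤ s + δ/2 := min_le_right _ _
      linarith
    have := hδ' ht₁Icc hd
    rw [hAs, dist_zero_right, Real.norm_eq_abs] at this
    exact (le_abs_self _).trans this.le
  have h1I : Set.Icc s t₁ ⊆ I := Set.Icc_subset_Icc hsI.1 ht₁I.2
  -- integrability of the product integrand on subintervals
  have hgint : IntegrableOn (fun u => (x u - y u) * (L * f u)) I := by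
    apply Integrable.bdd_mul (c := C) (hkint)
    · exact ((hxcont.sub hycont).aestronglyMeasurable measurableSet_Icc)
    · filter_upwards [ae_restrict_mem measurableSet_Icc] with u hu
      rw [Real.norm_eq_abs]
      exact hCb u hu
  -- key integral inequality
  have hkey : ∀ t ∈ Set.Icc s t₁, x t - y t ≤ ∫ u in s..t, (x u - y u) * (L * f u) := by
    intro t ht
    have htI : t ∈ I := h1I ht
    have hxs := hdiff x x' hx'int hxac s t hsI htI
    have hys := hdiff y y' hy'int hyac s t hsI htI
    have hsub' : Set.Icc s t ⊆ I := Set.Icc_subset_Icc hsI.1 htI.2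
    have hns : ∀ᵐ u ∂(volume.restrict (Set.Icc s t)), u ≠ s := by
      apply ae_restrict_of_ae
      rw [ae_iff]
      simp only [ne_eq, not_not]
      convert Real.volume_singleton (a := s) using 2
      exact Set.setOf_eq_eq_singleton
    have hmono : (∫ u in s..t, (x' u - y' u)) ≤ ∫ u in s..t, (x u - y u) * (L * f u) := by
      apply integral_mono_ae_restrict ht.1
        ((hii _ hx'int s t hsI htI).sub (hii _ hy'int s t hsI htI))
        ((hgint.mono_set (Set.uIcc_subset_Icc hsI htI)).intervalIntegrable)
      filter_upwards [ae_restrict_of_ae_restrict_of_subset hsub' hxineq,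
        ae_restrict_of_ae_restrict_of_subset hsub' hyeq,
        ae_restrict_mem measurableSet_Icc, hns] with u hxu hyu hu hus
      have hsu : s < u := lt_of_le_of_ne hu.1 (Ne.symm hus)
      have huI : u ∈ I := hsub' hu
      have hyx : y u < x u := hgt u hsu ((hu.2.trans ht.2).trans ht₁t₀)
      have hyu' : 0 < y u := hypos u huI
      have hxu' : 0 < x u := hyu'.trans hyx
      rw [hF] at hxu hyu
      rw [if_pos hxu'] at hxu
      rw [if_pos hyu'] at hyu
      have hGl := osgood_Glip ha hy₀pos (hyge u huI) hyx.le (hxleM u huI)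
      have hfG := mul_le_mul_of_nonneg_left hGl (hf0 u huI)
      rw [mul_sub] at hfG
      have e1 : f u * (x u * (1 + |Real.log (x u)| + a)) = f u * x u * (1 + |Real.log (x u)| + a) := by ring
      have e2 : f u * (y u * (1 + |Real.log (y u)| + a)) = f u * y u * (1 + |Real.log (y u)| + a) := by ring
      have e3 : f u * (L * (x u - y u)) = (x u - y u) * (L * f u) := by ring
      rw [e1, e2, e3] at hfG
      linarith
    have hws : x s - y s ≤ 0 := sub_nonpos.2 hsS.2
    rw [intervalIntegral.integral_sub (hii _ hx'int s t hsI htI) (hii _ hy'int s t hsI htI)] at hmono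
    linarith
  -- maximum of w on [s, t₁]
  obtain ⟨τ, hτ, hmax⟩ := isCompact_Icc.exists_isMaxOn (Set.nonempty_Icc.2 hst₁.le)
    ((hxcont.mono h1I).sub (hycont.mono h1I))
  have hτI : τ ∈ I := h1I hτ
  have hwt₁ : 0 < x t₁ - y t₁ := sub_pos.2 (hgt t₁ hst₁ ht₁t₀)
  have hwτ : 0 < x τ - y τ := hwt₁.trans_le (hmax (Set.right_mem_Icc.2 hst₁.le))
  have hstep : (∫ u in s..τ, (x u - y u) * (L * f u)) ≤ (x τ - y τ) * A τ := by
    have hmono2 : (∫ u in s..τ, (x u - y u) * (L * f u)) ≤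
        ∫ u in s..τ, (x τ - y τ) * (L * f u) := by
      apply integral_mono_on hτ.1
        ((hgint.mono_set (Set.uIcc_subset_Icc hsI hτI)).intervalIntegrable)
        ((hii _ hkint s τ hsI hτI).const_mul _)
      intro u hu
      have huI : u ∈ I := ⟨hsI.1.trans hu.1, (hu.2.trans hτ.2).trans ht₁I.2⟩
      have hle : x u - y u ≤ x τ - y τ := hmax ⟨hu.1, hu.2.trans hτ.2⟩
      exact mul_le_mul_of_nonneg_right hle (mul_nonneg hL0 (hf0 u huI))
    rwa [intervalIntegral.integral_const_mul] at hmono2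
  have hAτ : A τ ≤ 1/2 := (hAmono τ t₁ hτ.1 hτ.2 ht₁t₀).trans hAt₁
  have hfinal := (hkey τ hτ).trans hstep
  nlinarith
end

section
/- For every dimension n ≥ 1 and every p ∈ (1,∞) there exists a constant C = C(n,p) such that for every f ∈ L¹_loc(ℝⁿ) with ‖f‖_BMO < ∞ and every cube Q ⊂ ℝⁿ, ( (1/|Q|) ∫_Q |f(x) − f_Q|^p dx )^{1/p} ≤ C ‖f‖_BMO. In particular, every BMO function belongs to L^p locally (i.e. is p-integrable on every set of finite measure contained in a cube) for all 1 < p < ∞. -/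
open MeasureTheory Function
open scoped ENNReal NNReal Topology
open Set Metric Filter

noncomputable section

abbrev Ev (n : ℕ) := EuclideanSpace ℝ (Fin n)

/-- The axis-parallel cube with center `c` and side length `h`. -/
def cube {n : ℕ} (c : Ev n) (h : ℝ) : Set (Ev n) := {x | ∀ i, |x i - c i| ≤ h / 2}

/-- The average of `f` over the cube with center `c` and side length `h`
(whose Lebesgue measure is `h ^ n`). -/
def cubeAvg {n : ℕ} (f : Ev n → ℝ) (c : Ev n) (h : ℝ) : ℝ :=
  (h ^ n)⁻¹ • ∫ x in cube c h, f x

/-- The BMO seminorm of `f`: the supremum over all cubes `Q` of the mean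
oscillation of `f` over `Q`.  (This equals `‖M^# f‖_{L^∞}`, where `M^#` is the
sharp maximal function.) -/
def bmoENorm {n : ℕ} (f : Ev n → ℝ) : ℝ≥0∞ :=
  ⨆ (c : Ev n) (h : ℝ) (_ : 0 < h),
    ENNReal.ofReal ((h ^ n)⁻¹ * ∫ x in cube c h, |f x - cubeAvg f c h|)

variable {n : ℕ}

/-- Half-open cell with lower corner `l` and side `s`. -/
def cell (l : Fin n → ℝ) (s : ℝ) : Set (Ev n) := {x | ∀ i, l i ≤ x i ∧ x i < l i + s}

lemma box_volume (S : Fin n → Set ℝ) (hS : ∀ i, MeasurableSet (S i)) :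
    volume ({x : Ev n | ∀ i, x i ∈ S i}) = ∏ i, volume (S i) := by
  have : {x : Ev n | ∀ i, x i ∈ S i} =
      (MeasurableEquiv.toLp 2 (Fin n → ℝ)).symm ⁻¹' (Set.pi univ S) := by
    ext x
    simp only [Set.mem_preimage, Set.mem_pi, Set.mem_univ, forall_true_left, mem_setOf_eq,
      MeasurableEquiv.coe_toLp_symm]
  rw [this, (EuclideanSpace.volume_preserving_symm_measurableEquiv_toLp (Fin n)).measure_preimage
    (MeasurableSet.univ_pi hS).nullMeasurableSet, volume_pi_pi]

lemma cell_volume (l : Fin n → ℝ) {s : ℝ} (hs : 0 ≤ s) :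
    volume (cell l s) = ENNReal.ofReal (s ^ n) := by
  have : cell l s = {x : Ev n | ∀ i, x i ∈ Ico (l i) (l i + s)} := rfl
  rw [this, box_volume _ (fun i => measurableSet_Ico)]
  simp [Real.volume_Ico, ENNReal.ofReal_pow hs]

lemma cube_volume (c : Ev n) {h : ℝ} (hh : 0 ≤ h) :
    volume (cube c h) = ENNReal.ofReal (h ^ n) := by
  have : cube c h = {x : Ev n | ∀ i, x i ∈ Icc (c i - h/2) (c i + h/2)} := by
    ext x; simp [cube, abs_sub_le_iff, and_comm]; constructor
    · intro hx i; have := hx i; constructor <;> linarith [this.1, this.2]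
    · intro hx i; have := hx i; constructor <;> linarith [this.1, this.2]
  rw [this, box_volume _ (fun i => measurableSet_Icc)]
  simp only [Real.volume_Icc, show ∀ (a:ℝ), a + h/2 - (a - h/2) = h by intro a; ring]
  simp [ENNReal.ofReal_pow hh]

/-- center of the cell -/
def mid (l : Fin n → ℝ) (s : ℝ) : Ev n := (MeasurableEquiv.toLp 2 (Fin n → ℝ))
  (fun i => l i + s / 2)

lemma mid_apply (l : Fin n → ℝ) (s : ℝ) (i : Fin n) : mid l s i = l i + s / 2 := rfl

lemma mem_cube_iff {c : Ev n} {h : ℝ} {x : Ev n} :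
    x ∈ cube c h ↔ ∀ i, c i - h/2 ≤ x i ∧ x i ≤ c i + h/2 := by
  simp only [cube, mem_setOf_eq, abs_sub_le_iff]
  constructor <;> (intro hx i; have := hx i; constructor <;> linarith [this.1, this.2])

lemma cell_subset_cube (l : Fin n → ℝ) (s : ℝ) : cell l s ⊆ cube (mid l s) s := by
  intro x hx
  rw [mem_cube_iff]
  intro i
  have := hx i
  rw [mid_apply]
  constructor <;> linarith [this.1, this.2]

lemma hyperplane_null (i : Fin n) (a : ℝ) : volume {x : Ev n | x i = a} = 0 := by
  classical
  have : {x : Ev n | x i = a} = {x : Ev n | ∀ j, x j ∈ (if j = i then ({a} : Set ℝ) else univ)} := by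
    ext x
    simp only [mem_setOf_eq]
    constructor
    · intro hx j; by_cases hj : j = i
      · subst hj; simp [hx]
      · simp [hj]
    · intro hx; have := hx i; simpa using this
  rw [this, box_volume]
  · exact Finset.prod_eq_zero (Finset.mem_univ i) (by simp)
  · intro j; by_cases hj : j = i <;> simp [hj]

lemma cube_ae_cell (l : Fin n → ℝ) {s : ℝ} (hs : 0 ≤ s) :
    (cell l s : Set (Ev n)) =ᵐ[volume] cube (mid l s) s := by
  have h1 : cube (mid l s) s \ cell l s ⊆ ⋃ i, {x : Ev n | x i = l i + s} := by
    intro x hx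
    obtain ⟨hc, hnc⟩ := hx
    rw [mem_cube_iff] at hc
    simp only [cell, mem_setOf_eq, not_forall] at hnc
    obtain ⟨i, hi⟩ := hnc
    have h2 := hc i
    rw [mid_apply] at h2
    refine mem_iUnion.2 ⟨i, ?_⟩
    simp only [mem_setOf_eq]
    rcases not_and_or.mp hi with h | h
    · exfalso; exact h (by linarith [h2.1])
    · push_neg at h; linarith [h2.2]
  have hnull : volume (⋃ i, {x : Ev n | x i = l i + s}) = 0 :=
    le_antisymm ((measure_iUnion_le _).trans (by simp [hyperplane_null])) zero_le
  refine (MeasureTheory.ae_eq_set).2 ⟨?_, measure_mono_null h1 hnull⟩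
  have : cell l s \ cube (mid l s) s = ∅ := by
    rw [diff_eq_empty]; exact cell_subset_cube l s
  simp [this]

lemma cell_measurable (l : Fin n → ℝ) (s : ℝ) : MeasurableSet (cell l s) := by
  have : cell l s = (MeasurableEquiv.toLp 2 (Fin n → ℝ)).symm ⁻¹'
      (Set.pi univ (fun i => Ico (l i) (l i + s))) := by
    ext x
    simp only [Set.mem_preimage, Set.mem_pi, Set.mem_univ, forall_true_left]
    rfl
  rw [this]
  exact (MeasurableEquiv.toLp 2 (Fin n → ℝ)).symm.measurable (MeasurableSet.univ_pi
    (fun i => measurableSet_Ico))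

lemma cube_isCompact (c : Ev n) (h : ℝ) : IsCompact (cube c h) := by
  have hclosed : IsClosed (cube c h) := by
    have : cube c h = ⋂ i, (fun x : Ev n => x i) ⁻¹' (Icc (c i - h/2) (c i + h/2)) := by
      ext x; rw [mem_cube_iff]; simp [mem_iInter, mem_Icc]
    rw [this]
    refine isClosed_iInter fun i => IsClosed.preimage ?_ isClosed_Icc
    exact (EuclideanSpace.proj i).continuous
  have hbdd : Bornology.IsBounded (cube c h) := by
    refine (Metric.isBounded_iff_subset_closedBall c).2 ⟨Real.sqrt (n * (h/2)^2), fun x hx => ?_⟩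
    rw [Metric.mem_closedBall, EuclideanSpace.dist_eq]
    refine Real.sqrt_le_sqrt ?_
    calc ∑ i, dist (x i) (c i) ^ 2 ≤ ∑ _i : Fin n, (h/2)^2 := by
          refine Finset.sum_le_sum fun i _ => ?_
          have := hx i
          rw [Real.dist_eq]
          exact sq_le_sq' (by linarith [abs_nonneg (x i - c i), neg_abs_le (x i - c i)]) this
      _ = n * (h/2)^2 := by simp [Finset.sum_const, nsmul_eq_mul]
  exact Metric.isCompact_of_isClosed_isBounded hclosed hbdd

lemma integrableOn_cube {f : Ev n → ℝ} (hf : LocallyIntegrable f volume) (c : Ev n) (h : ℝ) :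
    IntegrableOn f (cube c h) volume :=
  hf.integrableOn_isCompact (cube_isCompact c h)

lemma integrableOn_cell {f : Ev n → ℝ} (hf : LocallyIntegrable f volume) (l : Fin n → ℝ) (s : ℝ) :
    IntegrableOn f (cell l s) volume :=
  (integrableOn_cube hf (mid l s) s).mono_set (cell_subset_cube l s)

/-- Average over a cell. -/
def cellAvg (f : Ev n → ℝ) (l : Fin n → ℝ) (s : ℝ) : ℝ := (s ^ n)⁻¹ * ∫ x in cell l s, f x

lemma integral_cell_eq_cube (f : Ev n → ℝ) (l : Fin n → ℝ) {s : ℝ} (hs : 0 ≤ s) :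
    ∫ x in cell l s, f x = ∫ x in cube (mid l s) s, f x :=
  setIntegral_congr_set (cube_ae_cell l hs)

lemma cellAvg_eq_cubeAvg (f : Ev n → ℝ) (l : Fin n → ℝ) {s : ℝ} (hs : 0 ≤ s) :
    cellAvg f l s = cubeAvg f (mid l s) s := by
  rw [cellAvg, cubeAvg, integral_cell_eq_cube f l hs, smul_eq_mul]

section Osc
variable {f : Ev n → ℝ}

lemma osc_nonneg (c : Ev n) {h : ℝ} (hh : 0 < h) :
    0 ≤ (h ^ n)⁻¹ * ∫ x in cube c h, |f x - cubeAvg f c h| :=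
  mul_nonneg (by positivity) (integral_nonneg fun x => abs_nonneg _)

lemma osc_le_bmo (hfin : bmoENorm f < ⊤) (c : Ev n) {h : ℝ} (hh : 0 < h) :
    (h ^ n)⁻¹ * ∫ x in cube c h, |f x - cubeAvg f c h| ≤ (bmoENorm f).toReal := by
  have h1 : ENNReal.ofReal ((h ^ n)⁻¹ * ∫ x in cube c h, |f x - cubeAvg f c h|) ≤ bmoENorm f := by
    refine le_trans ?_ (le_iSup _ c)
    refine le_trans ?_ (le_iSup _ h)
    exact le_iSup (fun _ : 0 < h => ENNReal.ofReal
      ((h ^ n)⁻¹ * ∫ x in cube c h, |f x - cubeAvg f c h|)) hh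
  calc (h ^ n)⁻¹ * ∫ x in cube c h, |f x - cubeAvg f c h|
      = (ENNReal.ofReal ((h ^ n)⁻¹ * ∫ x in cube c h, |f x - cubeAvg f c h|)).toReal :=
        (ENNReal.toReal_ofReal (osc_nonneg c hh)).symm
    _ ≤ (bmoENorm f).toReal := ENNReal.toReal_mono hfin.ne h1

lemma oscCell_le_bmo (hfin : bmoENorm f < ⊤) (l : Fin n → ℝ) {s : ℝ} (hs : 0 < s) :
    (s ^ n)⁻¹ * ∫ x in cell l s, |f x - cellAvg f l s| ≤ (bmoENorm f).toReal := by
  have : ∫ x in cell l s, |f x - cellAvg f l s|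
      = ∫ x in cube (mid l s) s, |f x - cubeAvg f (mid l s) s| := by
    rw [cellAvg_eq_cubeAvg f l hs.le]
    exact integral_cell_eq_cube _ l hs.le
  rw [this]
  exact osc_le_bmo hfin (mid l s) hs

lemma cellAvg_sub_const (hf : LocallyIntegrable f volume) (l : Fin n → ℝ) {s : ℝ} (hs : 0 < s)
    (a : ℝ) : cellAvg f l s - a = (s ^ n)⁻¹ * ∫ x in cell l s, (f x - a) := by
  rw [integral_sub (integrableOn_cell hf l s) (integrableOn_const (ne_of_lt ?_))]
  · rw [setIntegral_const, measureReal_def, cell_volume l hs.le, ENNReal.toReal_ofReal (by positivity),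
      smul_eq_mul, cellAvg]
    field_simp
  · rw [cell_volume l hs.le]; exact ENNReal.ofReal_lt_top

lemma abs_cellAvg_sub_const_le (hf : LocallyIntegrable f volume) (l : Fin n → ℝ) {s : ℝ}
    (hs : 0 < s) (a : ℝ) :
    |cellAvg f l s - a| ≤ (s ^ n)⁻¹ * ∫ x in cell l s, |f x - a| := by
  rw [cellAvg_sub_const hf l hs a, abs_mul, abs_of_nonneg (by positivity : (0:ℝ) ≤ (s ^ n)⁻¹)]
  gcongr
  have := norm_integral_le_integral_norm (μ := volume.restrict (cell l s)) (f := fun x => f x - a)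
  simpa [Real.norm_eq_abs] using this

end Osc

/-! ### Dyadic subcells -/

/-- Lower corner of the dyadic subcell at level `m` with index `k`. -/
def scl (l : Fin n → ℝ) (s : ℝ) (m : ℕ) (k : Fin n → ℕ) : Fin n → ℝ :=
  fun i => l i + k i * (s / 2 ^ m)

def subcell (l : Fin n → ℝ) (s : ℝ) (m : ℕ) (k : Fin n → ℕ) : Set (Ev n) :=
  cell (scl l s m k) (s / 2 ^ m)

lemma subcell_zero (l : Fin n → ℝ) (s : ℝ) : subcell l s 0 (fun _ => 0) = cell l s := by
  simp [subcell, scl, cell]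

lemma mem_subcell_iff {l : Fin n → ℝ} {s : ℝ} {m : ℕ} {k : Fin n → ℕ} {x : Ev n} :
    x ∈ subcell l s m k ↔ ∀ i, l i + k i * (s / 2 ^ m) ≤ x i ∧
      x i < l i + (k i + 1) * (s / 2 ^ m) := by
  simp only [subcell, cell, scl, mem_setOf_eq]
  constructor <;> (intro hx i; have := hx i; constructor <;> [linarith [this.1]; (push_cast; nlinarith [this.2])])

section Dyadic
variable {l : Fin n → ℝ} {s : ℝ}

lemma subcell_subset_parent (hs : 0 < s) (m : ℕ) (k : Fin n → ℕ) :
    subcell l s (m + 1) k ⊆ subcell l s m (fun i => k i / 2) := by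
  intro x hx
  rw [mem_subcell_iff] at hx ⊢
  intro i
  obtain ⟨h1, h2⟩ := hx i
  have t2 : s / 2 ^ (m + 1) = (s / 2 ^ m) / 2 := by ring
  have ht : (0:ℝ) < s / 2 ^ m := by positivity
  have hd1 : (↑(k i / 2) : ℝ) * 2 ≤ (k i : ℝ) := by
    have := Nat.div_mul_le_self (k i) 2
    exact_mod_cast this
  have hd2 : (k i : ℝ) + 1 ≤ ((k i / 2 : ℕ) : ℝ) * 2 + 2 := by
    have h := Nat.div_add_mod (k i) 2
    have h2 := Nat.mod_lt (k i) (show 0 < 2 by norm_num)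
    have : k i + 1 ≤ k i / 2 * 2 + 2 := by omega
    exact_mod_cast this
  constructor
  · refine le_trans ?_ h1
    rw [t2]
    nlinarith
  · refine lt_of_lt_of_le h2 ?_
    rw [t2]
    nlinarith

lemma subcell_subset_ancestor (hs : 0 < s) (m d : ℕ) (k : Fin n → ℕ) :
    subcell l s (m + d) k ⊆ subcell l s m (fun i => k i / 2 ^ d) := by
  induction d generalizing k with
  | zero => simp [Nat.div_one]
  | succ d ih =>
      intro x hx
      have h1 : x ∈ subcell l s (m + d) (fun i => k i / 2) :=
        subcell_subset_parent hs (m + d) k hx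
      have h2 := ih (fun i => k i / 2) h1
      have : (fun i => k i / 2 / 2 ^ d) = fun i => k i / 2 ^ (d + 1) := by
        funext i
        rw [Nat.div_div_eq_div_mul, pow_succ']
      rw [← this]
      exact h2

lemma subcell_unique {m : ℕ} {k k' : Fin n → ℕ} (hs : 0 < s) {x : Ev n}
    (h1 : x ∈ subcell l s m k) (h2 : x ∈ subcell l s m k') : k = k' := by
  rw [mem_subcell_iff] at h1 h2
  funext i
  by_contra hne
  have ht : (0:ℝ) < s / 2 ^ m := by positivity
  rcases Nat.lt_or_ge (k i) (k' i) with hlt | hge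
  · have : (k i : ℝ) + 1 ≤ (k' i : ℝ) := by exact_mod_cast hlt
    nlinarith [(h1 i).2, (h2 i).1]
  · rcases Nat.lt_or_ge (k' i) (k i) with hlt' | hge'
    · have : (k' i : ℝ) + 1 ≤ (k i : ℝ) := by exact_mod_cast hlt'
      nlinarith [(h2 i).2, (h1 i).1]
    · exact hne (le_antisymm hge' hge)

/-- The index of the level `m` subcell containing `x`. -/
def idx (l : Fin n → ℝ) (s : ℝ) (m : ℕ) (x : Ev n) : Fin n → ℕ :=
  fun i => ⌊(x i - l i) * 2 ^ m / s⌋₊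

lemma mem_subcell_idx (hs : 0 < s) (m : ℕ) {x : Ev n} (hx : x ∈ cell l s) :
    x ∈ subcell l s m (idx l s m x) := by
  rw [mem_subcell_iff]
  intro i
  obtain ⟨h1, h2⟩ := hx i
  simp only [idx]
  set u : ℝ := (x i - l i) * 2 ^ m / s with hu
  have hu0 : 0 ≤ u := div_nonneg (mul_nonneg (by linarith) (by positivity)) hs.le
  have hfl : (⌊u⌋₊ : ℝ) ≤ u := Nat.floor_le hu0
  have hfl2 : u < ⌊u⌋₊ + 1 := Nat.lt_floor_add_one u
  have ht : (0:ℝ) < s / 2 ^ m := by positivity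
  have key : x i - l i = u * (s / 2 ^ m) := by
    rw [hu]; field_simp
  constructor
  · nlinarith
  · nlinarith

lemma idx_lt (hs : 0 < s) (m : ℕ) {x : Ev n} (hx : x ∈ cell l s) (i : Fin n) :
    idx l s m x i < 2 ^ m := by
  obtain ⟨h1, h2⟩ := hx i
  have hnn : (0:ℝ) ≤ (x i - l i) * 2 ^ m / s :=
    div_nonneg (mul_nonneg (by linarith) (by positivity)) hs.le
  rw [idx, Nat.floor_lt hnn, div_lt_iff₀ hs]
  push_cast
  nlinarith [pow_pos (show (0:ℝ) < 2 by norm_num) m]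

lemma subcell_subset_cell (hs : 0 < s) (m : ℕ) {k : Fin n → ℕ} (hk : ∀ i, k i < 2 ^ m) :
    subcell l s m k ⊆ cell l s := by
  have h := subcell_subset_ancestor (l := l) hs 0 m k
  rw [zero_add] at h
  have : (fun i => k i / 2 ^ m) = (fun _ => 0 : Fin n → ℕ) := by
    funext i; exact Nat.div_eq_of_lt (hk i)
  rw [this, subcell_zero] at h
  exact h

lemma subcell_volume (hs : 0 < s) (m : ℕ) (k : Fin n → ℕ) :
    volume (subcell l s m k) = ENNReal.ofReal ((s / 2 ^ m) ^ n) :=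
  cell_volume _ (by positivity)

lemma idx_ancestor (hs : 0 < s) (m d : ℕ) {x : Ev n} (hx : x ∈ cell l s) :
    (fun i => idx l s (m + d) x i / 2 ^ d) = idx l s m x := by
  have h1 : x ∈ subcell l s m (fun i => idx l s (m + d) x i / 2 ^ d) :=
    subcell_subset_ancestor hs m d _ (mem_subcell_idx hs (m + d) hx)
  exact subcell_unique hs h1 (mem_subcell_idx hs m hx)

end Dyadic

/-! ### Differentiation along shrinking cells -/

lemma coord_le_dist (x y : Ev n) (i : Fin n) : dist (x i) (y i) ≤ dist x y := by
  rw [EuclideanSpace.dist_eq]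
  have h1 : dist (x i) (y i) = Real.sqrt (dist (x i) (y i) ^ 2) :=
    (Real.sqrt_sq dist_nonneg).symm
  rw [h1]
  refine Real.sqrt_le_sqrt ?_
  exact Finset.single_le_sum (f := fun j => dist (x j) (y j) ^ 2)
    (fun j _ => sq_nonneg _) (Finset.mem_univ i)

lemma dist_le_of_mem_cube {c : Ev n} {h : ℝ} {x y : Ev n} (hx : x ∈ cube c h)
    (hy : y ∈ cube c h) (hh : 0 ≤ h) : dist x y ≤ n * h := by
  rw [EuclideanSpace.dist_eq]
  have hb : ∀ i, dist (x i) (y i) ^ 2 ≤ h ^ 2 := by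
    intro i
    have h1 := hx i; have h2 := hy i
    rw [Real.dist_eq]
    have : |x i - y i| ≤ h := by
      have := abs_sub_abs_le_abs_sub (x i - c i) (y i - c i)
      have h3 : |x i - y i| ≤ |x i - c i| + |y i - c i| := by
        have := abs_sub (x i - c i) (y i - c i)
        calc |x i - y i| = |(x i - c i) - (y i - c i)| := by ring_nf
          _ ≤ |x i - c i| + |y i - c i| := abs_sub _ _
      linarith
    nlinarith [abs_nonneg (x i - y i), neg_abs_le (x i - y i), le_abs_self (x i - y i)]
  calc Real.sqrt (∑ i, dist (x i) (y i) ^ 2) ≤ Real.sqrt ((n * h) ^ 2) := by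
        refine Real.sqrt_le_sqrt ?_
        calc ∑ i, dist (x i) (y i) ^ 2 ≤ ∑ _i : Fin n, h ^ 2 :=
              Finset.sum_le_sum fun i _ => hb i
          _ = n * h ^ 2 := by simp [Finset.sum_const, nsmul_eq_mul]
          _ ≤ (n * h) ^ 2 := by
              have : (1 : ℝ) ≤ n ∨ (n : ℝ) = 0 := by
                rcases Nat.eq_zero_or_pos n with h0 | h0
                · exact Or.inr (by exact_mod_cast h0)
                · exact Or.inl (by exact_mod_cast h0)
              rcases this with h1 | h1
              · nlinarith [sq_nonneg h]
              · simp [h1]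
    _ = n * h := Real.sqrt_sq (by positivity)

lemma ball_subset_cube {c : Ev n} {h : ℝ} : Metric.ball c (h / 2) ⊆ cube c h := by
  intro y hy
  intro i
  have h1 : dist (y i) (c i) ≤ dist y c := coord_le_dist y c i
  rw [Metric.mem_ball] at hy
  rw [Real.dist_eq] at h1
  linarith

lemma cube_isClosed (c : Ev n) (h : ℝ) : IsClosed (cube c h) := by
  have : cube c h = ⋂ i, (fun x : Ev n => x i) ⁻¹' (Icc (c i - h/2) (c i + h/2)) := by
    ext x; rw [mem_cube_iff]; simp [mem_iInter, mem_Icc]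
  rw [this]
  exact isClosed_iInter fun i => IsClosed.preimage (EuclideanSpace.proj i).continuous isClosed_Icc

/-- The unit-ball volume in `Ev n`. -/
def iota (n : ℕ) : ℝ≥0∞ := volume (Metric.ball (0 : Ev n) 1)

lemma iota_ne_top : iota n ≠ ⊤ := measure_ball_lt_top.ne

lemma volume_closedBall_Ev (x : Ev n) {r : ℝ} (hr : 0 ≤ r) :
    volume (Metric.closedBall x r) = ENNReal.ofReal (r ^ n) * iota n := by
  have := MeasureTheory.Measure.addHaar_closedBall (μ := (volume : Measure (Ev n))) x hr
  rwa [finrank_euclideanSpace_fin] at this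

/-- The Vitali constant. -/
def vitaliC (n : ℕ) : ℝ≥0 := (iota n).toNNReal * ((3 * n : ℕ) : ℝ≥0) ^ n + 3 ^ n

lemma vitaliC_coe : (vitaliC n : ℝ≥0∞) = iota n * ((3 * n : ℕ) : ℝ≥0∞) ^ n + 3 ^ n := by
  rw [vitaliC]
  push_cast
  rw [ENNReal.coe_toNNReal iota_ne_top]

/-- The Vitali family on `Ev n`. -/
def vfam (n : ℕ) : VitaliFamily (volume : Measure (Ev n)) := by
  refine Vitali.vitaliFamily volume (vitaliC n) (fun x => ?_)
  refine Filter.Eventually.frequently ?_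
  filter_upwards [self_mem_nhdsWithin] with r (hr : 0 < r)
  rw [volume_closedBall_Ev x (by positivity), volume_closedBall_Ev x hr.le]
  rw [vitaliC_coe]
  calc ENNReal.ofReal ((3 * r) ^ n) * iota n
      = 3 ^ n * (ENNReal.ofReal (r ^ n) * iota n) := by
        rw [mul_pow, ENNReal.ofReal_mul (by positivity)]
        rw [ENNReal.ofReal_pow (by norm_num)]
        rw [ENNReal.ofReal_ofNat]
        ring
    _ ≤ (iota n * ((3 * n : ℕ) : ℝ≥0∞) ^ n + 3 ^ n) * (ENNReal.ofReal (r ^ n) * iota n) := by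
        gcongr
        exact le_add_self

open Filter in
lemma ae_tendsto_cellAvg {f : Ev n → ℝ} (hf : LocallyIntegrable f volume) :
    ∀ᵐ x : Ev n, ∀ (L : ℕ → (Fin n → ℝ)) (σ : ℕ → ℝ), (∀ m, 0 < σ m) →
      (∀ m, x ∈ cell (L m) (σ m)) → Tendsto σ atTop (𝓝 0) →
      Tendsto (fun m => cellAvg f (L m) (σ m)) atTop (𝓝 (f x)) := by
  filter_upwards [(vfam n).ae_tendsto_average hf] with x hx L σ hσ hmem hto
  set w : ℕ → Set (Ev n) := fun m => cube (mid (L m) (σ m)) (σ m) with hw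
  have hsub : ∀ m, w m ⊆ Metric.closedBall x ((n : ℝ) * σ m) := by
    intro m y hy
    rw [Metric.mem_closedBall]
    exact dist_le_of_mem_cube hy (cell_subset_cube _ _ (hmem m)) (hσ m).le
  have hsets : ∀ m, w m ∈ (vfam n).setsAt x := by
    intro m
    refine ⟨cube_isClosed _ _, ?_, ⟨(n : ℝ) * σ m, hsub m, ?_⟩⟩
    · refine ⟨mid (L m) (σ m), ?_⟩
      have hbs : Metric.ball (mid (L m) (σ m)) (σ m / 2) ⊆ interior (w m) :=
        interior_maximal ball_subset_cube Metric.isOpen_ball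
      exact hbs (Metric.mem_ball_self (by have := hσ m; positivity))
    · rw [volume_closedBall_Ev x (by have := hσ m; positivity), cube_volume _ (hσ m).le,
        vitaliC_coe]
      have key : ENNReal.ofReal ((3 * ((n : ℝ) * σ m)) ^ n)
          = ((3 * n : ℕ) : ℝ≥0∞) ^ n * ENNReal.ofReal ((σ m) ^ n) := by
        have h1 : (3 * ((n : ℝ) * σ m)) ^ n = ((3 * n : ℕ) : ℝ) ^ n * (σ m) ^ n := by
          rw [← mul_pow]; push_cast; ring
        rw [h1, ENNReal.ofReal_mul (by positivity), ENNReal.ofReal_pow (by positivity),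
          ENNReal.ofReal_natCast]
      rw [key]
      calc ((3 * n : ℕ) : ℝ≥0∞) ^ n * ENNReal.ofReal ((σ m) ^ n) * iota n
          = iota n * ((3 * n : ℕ) : ℝ≥0∞) ^ n * ENNReal.ofReal ((σ m) ^ n) := by ring
        _ ≤ (iota n * ((3 * n : ℕ) : ℝ≥0∞) ^ n + 3 ^ n) * ENNReal.ofReal ((σ m) ^ n) := by
            gcongr; exact le_self_add
  have htend : Tendsto w atTop ((vfam n).filterAt x) := by
    rw [VitaliFamily.tendsto_filterAt_iff]
    refine ⟨Eventually.of_forall hsets, fun ε hε => ?_⟩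
    have h1 : Tendsto (fun m => (n : ℝ) * σ m) atTop (𝓝 0) := by
      simpa using hto.const_mul (n : ℝ)
    filter_upwards [h1.eventually (gt_mem_nhds hε)] with m hm
    exact (hsub m).trans (Metric.closedBall_subset_closedBall hm.le)
  have hcomp := hx.comp htend
  refine hcomp.congr fun m => ?_
  show ⨍ y in w m, f y = cellAvg f (L m) (σ m)
  rw [setAverage_eq, measureReal_def, cube_volume _ (hσ m).le, ENNReal.toReal_ofReal (by have := hσ m; positivity),
    ← integral_cell_eq_cube f _ (hσ m).le, cellAvg, smul_eq_mul]

/-! ### Stopping time construction -/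

/-- Average over the subcell. -/
def Abar (f : Ev n → ℝ) (l : Fin n → ℝ) (s : ℝ) (m : ℕ) (k : Fin n → ℕ) : ℝ :=
  cellAvg f (scl l s m k) (s / 2 ^ m)

lemma Abar_zero (f : Ev n → ℝ) (l : Fin n → ℝ) (s : ℝ) :
    Abar f l s 0 (fun _ => 0) = cellAvg f l s := by
  have h1 : scl l s 0 (fun _ => 0) = l := by funext i; simp [scl]
  have h2 : s / 2 ^ (0:ℕ) = s := by norm_num
  rw [Abar, h1, h2]

def bad (f : Ev n → ℝ) (l : Fin n → ℝ) (s : ℝ) (m : ℕ) (k : Fin n → ℕ) : Prop :=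
  (∀ i, k i < 2 ^ m) ∧ 1 ≤ m ∧
    2 * (bmoENorm f).toReal < |Abar f l s m k - cellAvg f l s|

def isMax (f : Ev n → ℝ) (l : Fin n → ℝ) (s : ℝ) (m : ℕ) (k : Fin n → ℕ) : Prop :=
  bad f l s m k ∧ ∀ j, 1 ≤ j → j < m → ¬ bad f l s j (fun i => k i / 2 ^ (m - j))

def MaxIdx (f : Ev n → ℝ) (l : Fin n → ℝ) (s : ℝ) : Type :=
  {q : ℕ × (Fin n → ℕ) // isMax f l s q.1 q.2}

instance (f : Ev n → ℝ) (l : Fin n → ℝ) (s : ℝ) : Countable (MaxIdx f l s) := by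
  unfold MaxIdx; infer_instance

/-- The union of the maximal bad subcells. -/
def stopU (f : Ev n → ℝ) (l : Fin n → ℝ) (s : ℝ) : Set (Ev n) :=
  ⋃ d : MaxIdx f l s, subcell l s d.1.1 d.1.2

section Stopping
variable {f : Ev n → ℝ} {l : Fin n → ℝ} {s : ℝ}

lemma stop_aux (hs : 0 < s) {m k m' k'} (h : isMax f l s m k) (h' : isMax f l s m' k')
    (hmm : m < m') {x : Ev n} (hx : x ∈ subcell l s m k) (hx' : x ∈ subcell l s m' k') :
    False := by
  have hanc := subcell_subset_ancestor (l := l) hs m (m' - m) k'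
  have e : m + (m' - m) = m' := by omega
  rw [e] at hanc
  have hxa : x ∈ subcell l s m (fun i => k' i / 2 ^ (m' - m)) := hanc hx'
  have hk : k = fun i => k' i / 2 ^ (m' - m) := subcell_unique hs hx hxa
  exact h'.2 m h.1.2.1 hmm (hk ▸ h.1)

lemma stop_disjoint (hs : 0 < s) :
    Pairwise (Function.onFun Disjoint fun d : MaxIdx f l s => subcell l s d.1.1 d.1.2) := by
  intro d d' hne
  rw [Function.onFun, Set.disjoint_left]
  intro x hx hx'
  obtain ⟨⟨m, k⟩, h⟩ := d
  obtain ⟨⟨m', k'⟩, h'⟩ := d'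
  rcases lt_trichotomy m m' with hlt | heq | hgt
  · exact stop_aux hs h h' hlt hx hx'
  · subst heq
    have : k = k' := subcell_unique hs hx hx'
    subst this
    exact hne rfl
  · exact stop_aux hs h' h hgt hx' hx

lemma stopU_subset (hs : 0 < s) : stopU f l s ⊆ cell l s := by
  refine Set.iUnion_subset fun d => ?_
  exact subcell_subset_cell hs d.1.1 d.2.1.1

lemma volume_stopU (hs : 0 < s) :
    volume (stopU f l s) = ∑' d : MaxIdx f l s, volume (subcell l s d.1.1 d.1.2) :=
  measure_iUnion (stop_disjoint hs) (fun d => cell_measurable _ _)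

lemma integrableOn_absSub (hf : LocallyIntegrable f volume) (l : Fin n → ℝ) (s : ℝ) (a : ℝ) :
    IntegrableOn (fun x => |f x - a|) (cell l s) volume := by
  refine Integrable.abs ?_
  refine (integrableOn_cell hf l s).sub (integrableOn_const (ne_of_lt ?_))
  exact lt_of_le_of_lt (measure_mono (cell_subset_cube l s)) (cube_isCompact _ _).measure_lt_top

lemma volume_stopU_le (hf : LocallyIntegrable f volume) (hfin : bmoENorm f < ⊤) (hs : 0 < s)
    (hB : 0 < (bmoENorm f).toReal) :
    volume (stopU f l s) ≤ ENNReal.ofReal (s ^ n / 2) := by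
  set B := (bmoENorm f).toReal with hBdef
  set A₀ := cellAvg f l s with hA₀
  set g : Ev n → ℝ := fun x => |f x - A₀| with hg
  have hkey : ∀ d : MaxIdx f l s, ENNReal.ofReal (2 * B) * volume (subcell l s d.1.1 d.1.2)
      ≤ ∫⁻ x in subcell l s d.1.1 d.1.2, ENNReal.ofReal (g x) := by
    rintro ⟨⟨m, k⟩, hmax⟩
    have hsD : (0:ℝ) < s / 2 ^ m := by positivity
    have h1 : 2 * B < |Abar f l s m k - A₀| := hmax.1.2.2
    have h2 : |Abar f l s m k - A₀| ≤ ((s / 2 ^ m) ^ n)⁻¹ *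
        ∫ x in subcell l s m k, |f x - A₀| :=
      abs_cellAvg_sub_const_le hf _ hsD A₀
    have h3 : 2 * B * (s / 2 ^ m) ^ n ≤ ∫ x in subcell l s m k, |f x - A₀| := by
      have hpow : (0:ℝ) < (s / 2 ^ m) ^ n := by positivity
      have := (h1.trans_le h2)
      rw [inv_mul_eq_div, lt_div_iff₀ hpow] at this
      linarith
    calc ENNReal.ofReal (2 * B) * volume (subcell l s m k)
        = ENNReal.ofReal (2 * B * (s / 2 ^ m) ^ n) := by
          rw [subcell_volume hs, ← ENNReal.ofReal_mul (by positivity)]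
      _ ≤ ENNReal.ofReal (∫ x in subcell l s m k, g x) := ENNReal.ofReal_le_ofReal h3
      _ = ∫⁻ x in subcell l s m k, ENNReal.ofReal (g x) := by
          refine ofReal_integral_eq_lintegral_ofReal ?_ ?_
          · exact (integrableOn_absSub hf _ _ A₀).mono_set
              (subcell_subset_cell hs m hmax.1.1)
          · exact Filter.Eventually.of_forall fun x => abs_nonneg _
  have hsum : ENNReal.ofReal (2 * B) * volume (stopU f l s)
      ≤ ∫⁻ x in cell l s, ENNReal.ofReal (g x) := by
    rw [volume_stopU hs, ENNReal.tsum_mul_left.symm]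
    calc ∑' d : MaxIdx f l s, ENNReal.ofReal (2 * B) * volume (subcell l s d.1.1 d.1.2)
        ≤ ∑' d : MaxIdx f l s, ∫⁻ x in subcell l s d.1.1 d.1.2, ENNReal.ofReal (g x) :=
          ENNReal.tsum_le_tsum hkey
      _ = ∫⁻ x in stopU f l s, ENNReal.ofReal (g x) :=
          (lintegral_iUnion (fun d => cell_measurable _ _) (stop_disjoint hs) _).symm
      _ ≤ ∫⁻ x in cell l s, ENNReal.ofReal (g x) := lintegral_mono_set (stopU_subset hs)
  have hosc : ∫⁻ x in cell l s, ENNReal.ofReal (g x) ≤ ENNReal.ofReal (B * s ^ n) := by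
    rw [← ofReal_integral_eq_lintegral_ofReal (integrableOn_absSub hf l s A₀)
      (Filter.Eventually.of_forall fun x => abs_nonneg _)]
    refine ENNReal.ofReal_le_ofReal ?_
    have h4 := oscCell_le_bmo hfin l hs
    have hpow : (0:ℝ) < s ^ n := by positivity
    rw [inv_mul_eq_div, div_le_iff₀ hpow] at h4
    linarith [h4]
  have h2B : ENNReal.ofReal (2 * B) ≠ 0 := by
    simp only [ne_eq, ENNReal.ofReal_eq_zero, not_le]; linarith
  calc volume (stopU f l s)
      = (ENNReal.ofReal (2 * B))⁻¹ * (ENNReal.ofReal (2 * B) * volume (stopU f l s)) := by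
        rw [← mul_assoc, ENNReal.inv_mul_cancel h2B ENNReal.ofReal_ne_top, one_mul]
    _ ≤ (ENNReal.ofReal (2 * B))⁻¹ * ENNReal.ofReal (B * s ^ n) := by
        gcongr
        exact hsum.trans hosc
    _ = ENNReal.ofReal (B * s ^ n) / ENNReal.ofReal (2 * B) := by
        rw [ENNReal.div_eq_inv_mul]
    _ = ENNReal.ofReal (B * s ^ n / (2 * B)) := (ENNReal.ofReal_div_of_pos (by linarith)).symm
    _ = ENNReal.ofReal (s ^ n / 2) := by
        congr 1
        field_simp

lemma stop_avg (hf : LocallyIntegrable f volume) (hfin : bmoENorm f < ⊤) (hs : 0 < s)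
    {m : ℕ} {k : Fin n → ℕ} (h : isMax f l s m k) :
    |Abar f l s m k - cellAvg f l s|
      ≤ 2 * (bmoENorm f).toReal + 2 ^ n * (bmoENorm f).toReal := by
  set B := (bmoENorm f).toReal with hBdef
  have hB0 : 0 ≤ B := ENNReal.toReal_nonneg
  have hm : 1 ≤ m := h.1.2.1
  set m' := m - 1 with hm'
  have hmm : m = m' + 1 := by omega
  set kp : Fin n → ℕ := fun i => k i / 2 with hkp
  have hsub : subcell l s m k ⊆ subcell l s m' kp := by
    rw [hmm]; exact subcell_subset_parent hs m' k
  set sP := s / 2 ^ m' with hsP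
  have hsP0 : (0:ℝ) < sP := by positivity
  set cP := Abar f l s m' kp with hcP
  have hP : |cP - cellAvg f l s| ≤ 2 * B := by
    rcases Nat.eq_zero_or_pos m' with h0 | h0
    · have hk0 : kp = fun _ => 0 := by
        funext i
        have := h.1.1 i
        rw [hmm, h0] at this
        simp only [hkp]
        omega
      rw [hcP, h0, hk0, Abar_zero]
      simp only [sub_self, abs_zero]
      linarith
    · have hnb := h.2 m' h0 (by omega)
      have he : m - m' = 1 := by omega
      rw [he, pow_one] at hnb
      rw [bad] at hnb
      push_neg at hnb
      have hval : ∀ i, kp i < 2 ^ m' := by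
        intro i
        have := h.1.1 i
        rw [hmm, pow_succ] at this
        simp only [hkp]
        exact Nat.div_lt_of_lt_mul (by omega)
      exact hnb hval h0
  have hstep : |Abar f l s m k - cP| ≤ 2 ^ n * B := by
    have hsD : (0:ℝ) < s / 2 ^ m := by positivity
    have h1 : |Abar f l s m k - cP| ≤ ((s / 2 ^ m) ^ n)⁻¹ *
        ∫ x in subcell l s m k, |f x - cP| :=
      abs_cellAvg_sub_const_le hf _ hsD cP
    have h2 : ∫ x in subcell l s m k, |f x - cP| ≤ ∫ x in subcell l s m' kp, |f x - cP| := by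
      refine setIntegral_mono_set (integrableOn_absSub hf _ _ cP)
        (Filter.Eventually.of_forall fun x => abs_nonneg _) (HasSubset.Subset.eventuallyLE hsub)
    have h3 : ((s / 2 ^ m) ^ n)⁻¹ = 2 ^ n * (sP ^ n)⁻¹ := by
      rw [hsP, hmm]
      rw [← inv_pow, ← inv_pow, ← mul_pow]
      congr 1
      rw [pow_succ]
      field_simp
    have h4 : (sP ^ n)⁻¹ * ∫ x in subcell l s m' kp, |f x - cP| ≤ B :=
      oscCell_le_bmo hfin _ hsP0
    have hint : 0 ≤ ∫ x in subcell l s m' kp, |f x - cP| :=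
      integral_nonneg fun x => abs_nonneg _
    calc |Abar f l s m k - cP|
        ≤ ((s / 2 ^ m) ^ n)⁻¹ * ∫ x in subcell l s m k, |f x - cP| := h1
      _ ≤ ((s / 2 ^ m) ^ n)⁻¹ * ∫ x in subcell l s m' kp, |f x - cP| := by
          have : (0:ℝ) ≤ ((s / 2 ^ m) ^ n)⁻¹ := by positivity
          exact mul_le_mul_of_nonneg_left h2 this
      _ = 2 ^ n * ((sP ^ n)⁻¹ * ∫ x in subcell l s m' kp, |f x - cP|) := by
          rw [h3]; ring
      _ ≤ 2 ^ n * B := by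
          have : (0:ℝ) ≤ (2:ℝ) ^ n := by positivity
          exact mul_le_mul_of_nonneg_left h4 this
  calc |Abar f l s m k - cellAvg f l s|
      ≤ |Abar f l s m k - cP| + |cP - cellAvg f l s| := abs_sub_le _ _ _
    _ ≤ 2 ^ n * B + 2 * B := add_le_add hstep hP
    _ = 2 * B + 2 ^ n * B := by ring

open Filter in
lemma stop_compl (hf : LocallyIntegrable f volume) (hs : 0 < s) :
    ∀ᵐ x : Ev n, x ∈ cell l s \ stopU f l s →
      |f x - cellAvg f l s| ≤ 2 * (bmoENorm f).toReal := by
  classical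
  filter_upwards [ae_tendsto_cellAvg hf] with x hx hmem
  obtain ⟨hxc, hxu⟩ := hmem
  have hnb : ∀ m, ¬ bad f l s m (idx l s m x) := by
    intro m hbad
    have hex : ∃ j, bad f l s j (idx l s j x) := ⟨m, hbad⟩
    have hj₀ : bad f l s (Nat.find hex) (idx l s (Nat.find hex) x) := Nat.find_spec hex
    have hmax : isMax f l s (Nat.find hex) (idx l s (Nat.find hex) x) := by
      refine ⟨hj₀, fun j hj1 hj2 hb => ?_⟩
      have e : j + (Nat.find hex - j) = Nat.find hex := by omega
      have he : (fun i => idx l s (Nat.find hex) x i / 2 ^ (Nat.find hex - j)) = idx l s j x := by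
        have h5 := idx_ancestor (l := l) hs j (Nat.find hex - j) hxc
        rw [e] at h5; exact h5
      rw [he] at hb
      exact Nat.find_min hex hj2 hb
    exact hxu (Set.mem_iUnion.2 ⟨⟨(Nat.find hex, idx l s (Nat.find hex) x), hmax⟩,
      mem_subcell_idx hs (Nat.find hex) hxc⟩)
  have hb : ∀ m, |Abar f l s m (idx l s m x) - cellAvg f l s| ≤ 2 * (bmoENorm f).toReal := by
    intro m
    rcases Nat.eq_zero_or_pos m with h0 | h0
    · subst h0
      have hi : idx l s 0 x = fun _ => 0 := by
        funext i
        have := idx_lt hs 0 hxc i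
        simpa using this
      rw [hi, Abar_zero]
      simp only [sub_self, abs_zero]
      positivity
    · have h6 := hnb m
      rw [bad] at h6
      push_neg at h6
      exact h6 (fun i => idx_lt hs m hxc i) h0
  have htt : Tendsto (fun m => cellAvg f (scl l s m (idx l s m x)) (s / 2 ^ m)) atTop
      (𝓝 (f x)) := by
    refine hx (fun m => scl l s m (idx l s m x)) (fun m => s / 2 ^ m)
      (fun m => by positivity) (fun m => mem_subcell_idx hs m hxc) ?_
    have : (fun m : ℕ => s / 2 ^ m) = fun m : ℕ => s * (2⁻¹ : ℝ) ^ m := by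
      funext m; rw [inv_pow]; ring
    rw [this]
    simpa using (tendsto_pow_atTop_nhds_zero_of_lt_one (show (0:ℝ) ≤ 2⁻¹ by norm_num)
      (show (2⁻¹:ℝ) < 1 by norm_num)).const_mul s
  have habs : Tendsto (fun m => |Abar f l s m (idx l s m x) - cellAvg f l s|) atTop
      (𝓝 (|f x - cellAvg f l s|)) := by
    have := (htt.sub_const (cellAvg f l s)).abs
    exact this
  exact le_of_tendsto habs (Eventually.of_forall hb)

lemma jn_dist (hf : LocallyIntegrable f volume) (hfin : bmoENorm f < ⊤)
    (hB : 0 < (bmoENorm f).toReal) :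
    ∀ (k : ℕ) (l : Fin n → ℝ) (s : ℝ), 0 < s →
      volume {x | x ∈ cell l s ∧
          (2 + 2 ^ n) * (bmoENorm f).toReal * k < |f x - cellAvg f l s|}
        ≤ (2 : ℝ≥0∞)⁻¹ ^ k * ENNReal.ofReal (s ^ n) := by
  intro k
  induction k with
  | zero =>
      intro l s hs
      calc volume {x | x ∈ cell l s ∧
            (2 + 2 ^ n) * (bmoENorm f).toReal * (0:ℕ) < |f x - cellAvg f l s|}
          ≤ volume (cell l s) := measure_mono fun x hx => hx.1
        _ = ENNReal.ofReal (s ^ n) := cell_volume l hs.le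
        _ = (2 : ℝ≥0∞)⁻¹ ^ 0 * ENNReal.ofReal (s ^ n) := by rw [pow_zero, one_mul]
  | succ k ih =>
      intro l s hs
      set B := (bmoENorm f).toReal with hBdef
      set a : ℝ := (2 + 2 ^ n) * B with ha
      have ha0 : 0 < a := by positivity
      set A₀ := cellAvg f l s with hA₀
      set T := {x | x ∈ cell l s ∧ a * ((k:ℕ)+1 : ℕ) < |f x - A₀|} with hT
      have hTsub : T ⊆ (T ∩ stopU f l s) ∪ (T \ stopU f l s) := by
        intro x hx
        by_cases hxu : x ∈ stopU f l s
        · exact Or.inl ⟨hx, hxu⟩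
        · exact Or.inr ⟨hx, hxu⟩
      have hT1 : volume (T \ stopU f l s) = 0 := by
        have hae := stop_compl (l := l) (s := s) hf hs
        rw [Filter.eventually_iff, mem_ae_iff] at hae
        refine measure_mono_null (fun x hx => ?_) hae
        obtain ⟨⟨hxc, hxgt⟩, hxu⟩ := hx
        simp only [Set.mem_compl_iff, Set.mem_setOf_eq]
        intro hcon
        have h2B := hcon ⟨hxc, hxu⟩
        have : a * ((k:ℕ)+1 : ℕ) ≤ |f x - A₀| := le_of_lt hxgt
        have hge : 2 * B ≤ a * ((k:ℕ)+1 : ℕ) := by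
          push_cast
          nlinarith [pow_pos (show (0:ℝ) < 2 by norm_num) n, hB]
        linarith [hxgt, h2B, hge]
      have hT2 : volume (T ∩ stopU f l s) ≤ (2 : ℝ≥0∞)⁻¹ ^ k * volume (stopU f l s) := by
        have hmono : T ∩ stopU f l s ⊆
            ⋃ d : MaxIdx f l s, (T ∩ subcell l s d.1.1 d.1.2) := by
          intro x hx
          obtain ⟨hxT, hxu⟩ := hx
          obtain ⟨d, hd⟩ := Set.mem_iUnion.1 hxu
          exact Set.mem_iUnion.2 ⟨d, ⟨hxT, hd⟩⟩
        refine le_trans (measure_mono hmono) ?_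
        refine le_trans (measure_iUnion_le _) ?_
        have hcell : ∀ d : MaxIdx f l s, volume (T ∩ subcell l s d.1.1 d.1.2)
            ≤ (2 : ℝ≥0∞)⁻¹ ^ k * volume (subcell l s d.1.1 d.1.2) := by
          rintro ⟨⟨m, kk⟩, hmax⟩
          have hsD : (0:ℝ) < s / 2 ^ m := by positivity
          have hsub2 : T ∩ subcell l s m kk ⊆
              {x | x ∈ cell (scl l s m kk) (s / 2 ^ m) ∧
                a * (k:ℕ) < |f x - cellAvg f (scl l s m kk) (s / 2 ^ m)|} := by
            rintro x ⟨⟨hxc, hxgt⟩, hxD⟩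
            refine ⟨hxD, ?_⟩
            have htri : |f x - A₀| ≤ |f x - cellAvg f (scl l s m kk) (s / 2 ^ m)|
                + |Abar f l s m kk - A₀| := by
              have : |f x - A₀| ≤ |f x - Abar f l s m kk| + |Abar f l s m kk - A₀| :=
                abs_sub_le _ _ _
              exact this
            have havg := stop_avg hf hfin hs hmax
            have : a * ((k:ℕ)+1:ℕ) < |f x - cellAvg f (scl l s m kk) (s / 2 ^ m)|
                + (2 * B + 2 ^ n * B) := by
              refine lt_of_lt_of_le hxgt (htri.trans ?_)
              gcongr
            push_cast at this ⊢
            nlinarith [this]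
          refine le_trans (measure_mono hsub2) ?_
          rw [subcell_volume hs]
          exact ih (scl l s m kk) (s / 2 ^ m) hsD
        refine le_trans (ENNReal.tsum_le_tsum hcell) ?_
        rw [ENNReal.tsum_mul_left, ← volume_stopU hs]
      have hstopmeas := volume_stopU_le (l := l) hf hfin hs hB
      calc volume T ≤ volume (T ∩ stopU f l s) + volume (T \ stopU f l s) :=
            (measure_mono hTsub).trans (measure_union_le _ _)
        _ ≤ (2 : ℝ≥0∞)⁻¹ ^ k * volume (stopU f l s) + 0 := by
            rw [hT1]; gcongr
        _ ≤ (2 : ℝ≥0∞)⁻¹ ^ k * ENNReal.ofReal (s ^ n / 2) := by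
            rw [add_zero]; gcongr
        _ = (2 : ℝ≥0∞)⁻¹ ^ (k+1) * ENNReal.ofReal (s ^ n) := by
            rw [pow_succ, mul_assoc]
            congr 1
            rw [ENNReal.ofReal_div_of_pos (by norm_num)]
            rw [ENNReal.div_eq_inv_mul]
            congr 1
            rw [ENNReal.ofReal_ofNat]

lemma Ksummable (c : ℕ) : Summable (fun k : ℕ => ((k:ℝ)+1) ^ c * (1/2:ℝ) ^ k) := by
  have h1 : Summable (fun k : ℕ => ((k:ℝ)) ^ c * (1/2:ℝ) ^ k) :=
    summable_pow_mul_geometric_of_norm_lt_one c (by rw [Real.norm_eq_abs]; rw [abs_of_pos (by norm_num : (0:ℝ) < 1/2)]; norm_num)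
  have h2 := (summable_nat_add_iff 1).2 h1
  have h3 : (fun k : ℕ => ((k:ℝ)+1) ^ c * (1/2:ℝ) ^ k)
      = fun k : ℕ => 2 * (((k+1:ℕ):ℝ) ^ c * (1/2:ℝ) ^ (k+1)) := by
    funext k
    push_cast
    ring
  rw [h3]
  exact h2.mul_left 2

lemma jn_lintegral (hf : LocallyIntegrable f volume) (hfin : bmoENorm f < ⊤)
    (hB : 0 < (bmoENorm f).toReal) {p : ℝ} (hp : 1 < p) (l : Fin n → ℝ) {s : ℝ} (hs : 0 < s) :
    ∫⁻ x in cell l s, ENNReal.ofReal (|f x - cellAvg f l s| ^ p)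
      ≤ ENNReal.ofReal (s ^ n * (((2 + 2 ^ n) * (bmoENorm f).toReal) ^ p *
        ∑' k : ℕ, ((k:ℝ)+1) ^ (⌈p⌉₊) * (1/2:ℝ) ^ k)) := by
  classical
  set B := (bmoENorm f).toReal with hBdef
  set a : ℝ := (2 + 2 ^ n) * B with ha
  have ha0 : 0 < a := by positivity
  set A₀ := cellAvg f l s with hA₀
  set g : Ev n → ℝ := fun x => |f x - A₀| with hg
  set K : ℝ := ∑' k : ℕ, ((k:ℝ)+1) ^ (⌈p⌉₊) * (1/2:ℝ) ^ k with hK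
  have hp0 : 0 < p := lt_trans one_pos hp
  -- a measurable version of g on the cell
  obtain ⟨g', hg'm, hae⟩ := ((integrableOn_absSub hf l s A₀).aemeasurable : AEMeasurable g _)
  have haeres : ∀ᵐ x : Ev n, x ∈ cell l s → g x = g' x :=
    (ae_restrict_iff' (cell_measurable l s)).1 hae
  set S : ℕ → Set (Ev n) := fun k => cell l s ∩ {x | a * k < g' x} with hS
  have hSmeas : ∀ k, MeasurableSet (S k) := fun k =>
    (cell_measurable l s).inter (measurableSet_lt measurable_const hg'm)
  have hSvol : ∀ k, volume (S k) ≤ (2 : ℝ≥0∞)⁻¹ ^ k * ENNReal.ofReal (s ^ n) := by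
    intro k
    have hTk := jn_dist hf hfin hB k l s hs
    set T := {x | x ∈ cell l s ∧ a * k < g x} with hT
    have hN : volume {x | ¬ (x ∈ cell l s → g x = g' x)} = 0 := ae_iff.1 haeres
    have hsub : S k ⊆ T ∪ {x | ¬ (x ∈ cell l s → g x = g' x)} := by
      rintro x ⟨hxc, hxgt⟩
      by_cases hxe : g x = g' x
      · exact Or.inl ⟨hxc, by rw [hxe]; exact hxgt⟩
      · exact Or.inr (by simp only [Set.mem_setOf_eq]; intro hcon; exact hxe (hcon hxc))
    calc volume (S k) ≤ volume T + volume {x | ¬ (x ∈ cell l s → g x = g' x)} :=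
          (measure_mono hsub).trans (measure_union_le _ _)
      _ = volume T := by rw [hN, add_zero]
      _ ≤ (2 : ℝ≥0∞)⁻¹ ^ k * ENNReal.ofReal (s ^ n) := hTk
  -- pointwise bound
  have hpt : ∀ᵐ x : Ev n,
      (cell l s).indicator (fun x => ENNReal.ofReal (g x ^ p)) x
        ≤ ∑' k : ℕ, (S k).indicator (fun _ => ENNReal.ofReal ((a * ((k:ℝ)+1)) ^ p)) x := by
    filter_upwards [haeres] with x hxe
    by_cases hxc : x ∈ cell l s
    · rw [Set.indicator_of_mem hxc]
      have hgx : 0 ≤ g x := abs_nonneg _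
      rcases eq_or_lt_of_le hgx with h0 | h0
      · rw [← h0, Real.zero_rpow (ne_of_gt hp0)]
        simp
      · set v : ℝ := g x / a with hv
        have hv0 : 0 < v := by positivity
        have hceil : 1 ≤ ⌈v⌉₊ := Nat.one_le_iff_ne_zero.2 (by
          simp only [ne_eq, Nat.ceil_eq_zero, not_le]; exact hv0)
        set k₀ : ℕ := ⌈v⌉₊ - 1 with hk₀
        have hk₀c : (k₀ : ℝ) = (⌈v⌉₊ : ℝ) - 1 := by
          rw [hk₀, Nat.cast_sub hceil, Nat.cast_one]
        have hlt : a * k₀ < g x := by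
          have h1 : (⌈v⌉₊ : ℝ) < v + 1 := Nat.ceil_lt_add_one hv0.le
          have h2 : (k₀ : ℝ) < v := by rw [hk₀c]; linarith
          calc a * (k₀:ℝ) < a * v := by exact mul_lt_mul_of_pos_left h2 ha0
            _ = g x := by rw [hv]; field_simp
        have hle : g x ≤ a * ((k₀:ℝ)+1) := by
          have h1 : v ≤ (⌈v⌉₊ : ℝ) := Nat.le_ceil v
          have h2 : (k₀:ℝ) + 1 = (⌈v⌉₊ : ℝ) := by rw [hk₀c]; ring
          rw [h2]
          calc g x = a * v := by rw [hv]; field_simp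
            _ ≤ a * (⌈v⌉₊ : ℝ) := by exact mul_le_mul_of_nonneg_left h1 ha0.le
        have hxe' : g x = g' x := hxe hxc
        have hmem : x ∈ S k₀ := ⟨hxc, by rw [Set.mem_setOf_eq, ← hxe']; exact hlt⟩
        calc ENNReal.ofReal (g x ^ p) ≤ ENNReal.ofReal ((a * ((k₀:ℝ)+1)) ^ p) :=
              ENNReal.ofReal_le_ofReal (Real.rpow_le_rpow hgx hle hp0.le)
          _ = (S k₀).indicator (fun _ => ENNReal.ofReal ((a * ((k₀:ℝ)+1)) ^ p)) x := by
              rw [Set.indicator_of_mem hmem]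
          _ ≤ ∑' k : ℕ, (S k).indicator (fun _ => ENNReal.ofReal ((a * ((k:ℝ)+1)) ^ p)) x :=
              ENNReal.le_tsum k₀
    · rw [Set.indicator_of_notMem hxc]
      exact zero_le
  -- integrate
  calc ∫⁻ x in cell l s, ENNReal.ofReal (g x ^ p)
      = ∫⁻ x, (cell l s).indicator (fun x => ENNReal.ofReal (g x ^ p)) x := by
        rw [lintegral_indicator (cell_measurable l s)]
    _ ≤ ∫⁻ x, ∑' k : ℕ, (S k).indicator (fun _ => ENNReal.ofReal ((a * ((k:ℝ)+1)) ^ p)) x :=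
        lintegral_mono_ae hpt
    _ = ∑' k : ℕ, ∫⁻ x, (S k).indicator (fun _ => ENNReal.ofReal ((a * ((k:ℝ)+1)) ^ p)) x :=
        lintegral_tsum fun k => ((measurable_const.indicator (hSmeas k)).aemeasurable)
    _ = ∑' k : ℕ, ENNReal.ofReal ((a * ((k:ℝ)+1)) ^ p) * volume (S k) := by
        refine tsum_congr fun k => ?_
        rw [lintegral_indicator_const (hSmeas k)]
    _ ≤ ∑' k : ℕ, ENNReal.ofReal (a ^ p * (((k:ℝ)+1) ^ (⌈p⌉₊) * (1/2:ℝ) ^ k))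
          * ENNReal.ofReal (s ^ n) := by
        refine ENNReal.tsum_le_tsum fun k => ?_
        have h1 : ENNReal.ofReal ((a * ((k:ℝ)+1)) ^ p)
            ≤ ENNReal.ofReal (a ^ p * ((k:ℝ)+1) ^ (⌈p⌉₊)) := by
          refine ENNReal.ofReal_le_ofReal ?_
          rw [Real.mul_rpow ha0.le (by positivity)]
          refine mul_le_mul_of_nonneg_left ?_ (Real.rpow_nonneg ha0.le p)
          calc ((k:ℝ)+1) ^ p ≤ ((k:ℝ)+1) ^ ((⌈p⌉₊ : ℕ) : ℝ) :=
                Real.rpow_le_rpow_of_exponent_le (by push_cast; linarith [Nat.cast_nonneg (α := ℝ) k])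
                  (Nat.le_ceil p)
            _ = ((k:ℝ)+1) ^ (⌈p⌉₊ : ℕ) := Real.rpow_natCast _ _
        have h2 : ((2 : ℝ≥0∞)⁻¹) ^ k = ENNReal.ofReal ((1/2:ℝ) ^ k) := by
          rw [ENNReal.ofReal_pow (by norm_num)]
          congr 1
          rw [one_div, ENNReal.ofReal_inv_of_pos (by norm_num)]
          norm_num
        calc ENNReal.ofReal ((a * ((k:ℝ)+1)) ^ p) * volume (S k)
            ≤ ENNReal.ofReal (a ^ p * ((k:ℝ)+1) ^ (⌈p⌉₊)) *
                ((2 : ℝ≥0∞)⁻¹ ^ k * ENNReal.ofReal (s ^ n)) := by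
              exact mul_le_mul h1 (hSvol k) zero_le zero_le
          _ = ENNReal.ofReal (a ^ p * (((k:ℝ)+1) ^ (⌈p⌉₊) * (1/2:ℝ) ^ k))
                * ENNReal.ofReal (s ^ n) := by
              have e1 : a ^ p * (((k:ℝ)+1) ^ (⌈p⌉₊) * (1/2:ℝ) ^ k)
                  = (a ^ p * ((k:ℝ)+1) ^ (⌈p⌉₊)) * (1/2:ℝ) ^ k := by ring
              rw [h2, e1, ENNReal.ofReal_mul (mul_nonneg (Real.rpow_nonneg ha0.le p)
                (by positivity))]
              ring
    _ = ENNReal.ofReal (∑' k : ℕ, a ^ p * (((k:ℝ)+1) ^ (⌈p⌉₊) * (1/2:ℝ) ^ k))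
          * ENNReal.ofReal (s ^ n) := by
        rw [ENNReal.tsum_mul_right]
        congr 1
        rw [ENNReal.ofReal_tsum_of_nonneg
          (fun k => mul_nonneg (Real.rpow_nonneg ha0.le p) (by positivity))
          ((Ksummable ⌈p⌉₊).mul_left _)]
    _ = ENNReal.ofReal (s ^ n * (a ^ p * K)) := by
        rw [tsum_mul_left,
          ← ENNReal.ofReal_mul (mul_nonneg (Real.rpow_nonneg ha0.le p)
            (tsum_nonneg (fun k => by positivity)))]
        congr 1
        ring

end Stopping

lemma mid_eq {c : Ev n} {h : ℝ} : mid (fun i => c i - h / 2) h = c := by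
  ext i
  rw [mid_apply]
  ring


/-- **John–Nirenberg `L^p` estimate.**  For every dimension `n ≥ 1` and every
`p ∈ (1,∞)` there is a constant `C = C(n,p)` such that for every
`f ∈ L¹_loc ∩ BMO(ℝⁿ)` and every cube `Q`, the function `|f - f_Q|^p` is
integrable on `Q` and `((1/|Q|) ∫_Q |f - f_Q|^p)^{1/p} ≤ C ‖f‖_BMO`.  In
particular every BMO function is locally `p`-integrable for all `1 < p < ∞`. -/
theorem john_nirenberg_lp (n : ℕ) (hn : 1 ≤ n) (p : ℝ) (hp : 1 < p) :
    ∃ C : ℝ, 0 < C ∧ ∀ f : Ev n → ℝ,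
      MeasureTheory.LocallyIntegrable f volume → bmoENorm f < ⊤ →
      ∀ (c : Ev n) (h : ℝ), 0 < h →
        IntegrableOn (fun x => |f x - cubeAvg f c h| ^ p) (cube c h) volume ∧
        ((h ^ n)⁻¹ * ∫ x in cube c h, |f x - cubeAvg f c h| ^ p) ^ (1 / p) ≤
          C * (bmoENorm f).toReal := by
  have hp0 : 0 < p := lt_trans one_pos hp
  set K : ℝ := ∑' k : ℕ, ((k:ℝ)+1) ^ (⌈p⌉₊) * (1/2:ℝ) ^ k with hKdef
  have hK0 : 0 ≤ K := tsum_nonneg fun k => by positivity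
  refine ⟨(2 + 2 ^ n) * (K + 1) ^ (1/p), by positivity, ?_⟩
  intro f hf hfin c h hh
  set B := (bmoENorm f).toReal with hBdef
  have hB0 : 0 ≤ B := ENNReal.toReal_nonneg
  set l : Fin n → ℝ := fun i => c i - h/2 with hldef
  have hmid : mid l h = c := mid_eq
  have havg : cubeAvg f c h = cellAvg f l h := by rw [cellAvg_eq_cubeAvg f l hh.le, hmid]
  set F : Ev n → ℝ := fun x => |f x - cubeAvg f c h| ^ p with hFdef
  have hFnn : 0 ≤ᵐ[volume.restrict (cube c h)] F :=
    Filter.Eventually.of_forall fun x => Real.rpow_nonneg (abs_nonneg _) p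
  have habsInt : IntegrableOn (fun x => |f x - cubeAvg f c h|) (cube c h) volume := by
    refine Integrable.abs ?_
    refine (integrableOn_cube hf c h).sub (integrableOn_const (ne_of_lt ?_))
    exact (cube_isCompact c h).measure_lt_top
  have hFmeas : AEStronglyMeasurable F (volume.restrict (cube c h)) := by
    have hg : AEMeasurable (fun x => |f x - cubeAvg f c h|) (volume.restrict (cube c h)) :=
      habsInt.aemeasurable
    exact (hg.pow aemeasurable_const).aestronglyMeasurable
  rcases eq_or_lt_of_le hB0 with hBz | hBpos
  · -- B = 0
    have hosc := osc_le_bmo hfin c hh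
    rw [← hBdef, ← hBz] at hosc
    have hI0 : ∫ x in cube c h, |f x - cubeAvg f c h| = 0 := by
      have hInn : 0 ≤ ∫ x in cube c h, |f x - cubeAvg f c h| :=
        integral_nonneg fun x => abs_nonneg _
      nlinarith [inv_pos.2 (pow_pos hh n : (0:ℝ) < h ^ n), hosc, hInn]
    have hzero : (fun x => |f x - cubeAvg f c h|) =ᵐ[volume.restrict (cube c h)] 0 :=
      (integral_eq_zero_iff_of_nonneg (fun x => abs_nonneg _) habsInt).1 hI0
    have hzF : F =ᵐ[volume.restrict (cube c h)] 0 := by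
      filter_upwards [hzero] with x hx
      have : |f x - cubeAvg f c h| = 0 := hx
      simp only [hFdef, this]
      exact Real.zero_rpow (ne_of_gt hp0)
    constructor
    · exact (integrable_zero _ _ _).congr hzF.symm
    · have : ∫ x in cube c h, F x = 0 := by
        rw [integral_congr_ae hzF]
        simp
      rw [this, mul_zero, Real.zero_rpow (by positivity : (1/p) ≠ 0)]
      rw [← hBz, mul_zero]
  · -- B > 0
    set a : ℝ := (2 + 2 ^ n) * B with ha
    have ha0 : 0 < a := by positivity
    have hlin := jn_lintegral hf hfin hBpos hp l hh
    have hlin' : ∫⁻ x in cube c h, ENNReal.ofReal (F x)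
        ≤ ENNReal.ofReal (h ^ n * (a ^ p * K)) := by
      have heq : ∫⁻ x in cube c h, ENNReal.ofReal (F x)
          = ∫⁻ x in cell l h, ENNReal.ofReal (|f x - cellAvg f l h| ^ p) := by
        have e1 : ∫⁻ x in cell l h, ENNReal.ofReal (|f x - cellAvg f l h| ^ p)
            = ∫⁻ x in cube (mid l h) h, ENNReal.ofReal (|f x - cellAvg f l h| ^ p) :=
          setLIntegral_congr (cube_ae_cell l hh.le)
        rw [e1, hmid]
        refine lintegral_congr fun x => ?_
        simp only [hFdef, havg]
      rw [heq]
      exact hlin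
    have hfi : HasFiniteIntegral F (volume.restrict (cube c h)) := by
      rw [hasFiniteIntegral_iff_ofReal hFnn]
      exact lt_of_le_of_lt hlin' ENNReal.ofReal_lt_top
    have hint : IntegrableOn F (cube c h) volume := ⟨hFmeas, hfi⟩
    refine ⟨hint, ?_⟩
    have hnum : ∫ x in cube c h, F x ≤ h ^ n * (a ^ p * K) := by
      rw [integral_eq_lintegral_of_nonneg_ae hFnn hFmeas]
      have h1 : (∫⁻ x in cube c h, ENNReal.ofReal (F x)).toReal
          ≤ (ENNReal.ofReal (h ^ n * (a ^ p * K))).toReal :=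
        ENNReal.toReal_mono ENNReal.ofReal_ne_top hlin'
      rwa [ENNReal.toReal_ofReal (mul_nonneg (by positivity)
        (mul_nonneg (Real.rpow_nonneg ha0.le p) hK0))] at h1
    have hLnn : 0 ≤ (h ^ n)⁻¹ * ∫ x in cube c h, F x := by
      have := integral_nonneg_of_ae hFnn
      positivity
    have hle : (h ^ n)⁻¹ * (∫ x in cube c h, F x) ≤ a ^ p * (K + 1) := by
      have hpow : (0:ℝ) < h ^ n := by positivity
      calc (h ^ n)⁻¹ * ∫ x in cube c h, F x ≤ (h ^ n)⁻¹ * (h ^ n * (a ^ p * K)) := by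
            exact mul_le_mul_of_nonneg_left hnum (by positivity)
        _ = a ^ p * K := by field_simp
        _ ≤ a ^ p * (K + 1) := by
            have := Real.rpow_nonneg ha0.le p
            nlinarith
    calc ((h ^ n)⁻¹ * ∫ x in cube c h, F x) ^ (1/p)
        ≤ (a ^ p * (K + 1)) ^ (1/p) := Real.rpow_le_rpow hLnn hle (by positivity)
      _ = a * (K + 1) ^ (1/p) := by
          rw [Real.mul_rpow (Real.rpow_nonneg ha0.le p) (by positivity)]
          congr 1
          rw [← Real.rpow_mul ha0.le, mul_one_div, div_self (ne_of_gt hp0), Real.rpow_one]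
      _ = (2 + 2 ^ n) * (K + 1) ^ (1/p) * B := by rw [ha]; ring

end
end
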